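/- Let Ψ(N) be the number of products of matrices A = [[1,0],[1,1]] and B = [[1,1],[0,1]] (words in the free monoid on {A,B} of length ≥ 1) whose trace is at most N, let Ψ_ev(N) count such products of even word length beginning with A and ending with B, and let Ψ_odd(N) count those of odd word length beginning and ending with B. Then Ψ(N) = 2Ψ_ev(N) + 2Ψ_odd(N). -/

import Mathlib

def matA : Matrix (Fin 2) (Fin 2) ℤ := !![1, 0; 1, 1]
def matB : Matrix (Fin 2) (Fin 2) ℤ := !![1, 1; 0, 1]

/-- The word in the monoid generated by A, B indexed by a list of letters
(`true ↦ A`, `false ↦ B`). -/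
def wordProd (l : List Bool) : Matrix (Fin 2) (Fin 2) ℤ :=
  (l.map (fun b => if b then matA else matB)).prod

/-- The alternating product `X^{a₁} Y^{a₂} X^{a₃} ⋯` attached to a list of
positive exponents. -/
def altProd (X Y : Matrix (Fin 2) (Fin 2) ℤ) : List ℕ → Matrix (Fin 2) (Fin 2) ℤ
  | [] => 1
  | a :: t => X ^ a * altProd Y X t

/-- `Ψ(N) = Σ_{n=3}^N Φ(n)`: the number of nonempty words in A, B whose trace
lies in `[3, N]` (every word other than a pure power of A or B has trace ≥ 3,
and pure powers have trace 2). -/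
noncomputable def PsiTot (N : ℤ) : ℕ :=
  Nat.card {l : List Bool // l ≠ [] ∧ 3 ≤ (wordProd l).trace ∧ (wordProd l).trace ≤ N}

/-- `Ψ_ev(N)`: the number of words `A^{a₁} B^{a₂} ⋯ A^{a₂ₘ₋₁} B^{a₂ₘ}` (even
block length, beginning with A and ending with B, `m ≥ 1`) of trace at most `N`. -/
noncomputable def PsiEv (N : ℤ) : ℕ :=
  Nat.card {l : List ℕ // l ≠ [] ∧ Even l.length ∧ (∀ x ∈ l, 0 < x) ∧
    (altProd matA matB l).trace ≤ N}

/-- `Ψ_odd(N)`: the number of words `B^{a₁} A^{a₂} ⋯ A^{a₂ₘ} B^{a₂ₘ₊₁}` (odd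
block length, beginning and ending with B, `m ≥ 1`) of trace at most `N`. -/
noncomputable def PsiOdd (N : ℤ) : ℕ :=
  Nat.card {l : List ℕ // Odd l.length ∧ 3 ≤ l.length ∧ (∀ x ∈ l, 0 < x) ∧
    (altProd matB matA l).trace ≤ N}

open Matrix

lemma matA_pow (a : ℕ) : matA ^ a = !![1, 0; (a : ℤ), 1] := by
  induction a with
  | zero => simp [Matrix.one_fin_two]
  | succ n ih =>
    rw [pow_succ, ih, matA]
    norm_num [Matrix.mul_fin_two]

lemma matB_pow (a : ℕ) : matB ^ a = !![1, (a : ℤ); 0, 1] := by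
  induction a with
  | zero => simp [Matrix.one_fin_two]
  | succ n ih =>
    rw [pow_succ, ih, matB]
    norm_num [Matrix.mul_fin_two]
    ring_nf

lemma trace_matA_pow (a : ℕ) : (matA ^ a).trace = 2 := by
  rw [matA_pow]; simp [Matrix.trace_fin_two]

lemma trace_matB_pow (a : ℕ) : (matB ^ a).trace = 2 := by
  rw [matB_pow]; simp [Matrix.trace_fin_two]

lemma altProd_nil (X Y : Matrix (Fin 2) (Fin 2) ℤ) : altProd X Y [] = 1 := rfl
lemma altProd_cons (X Y : Matrix (Fin 2) (Fin 2) ℤ) (a : ℕ) (t : List ℕ) :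
    altProd X Y (a :: t) = X ^ a * altProd Y X t := rfl

lemma altProd_concat (X Y : Matrix (Fin 2) (Fin 2) ℤ) (l : List ℕ) (a : ℕ) :
    altProd X Y (l ++ [a]) = altProd X Y l * (if Even l.length then X else Y) ^ a := by
  induction l generalizing X Y with
  | nil => simp [altProd_nil, altProd_cons]
  | cons b t ih =>
    simp only [List.cons_append, altProd_cons, ih Y X, List.length_cons]
    rw [mul_assoc]
    congr 2
    by_cases h : Even t.length
    · simp [h, Nat.even_add_one]
    · simp [h, Nat.even_add_one]

lemma altProd_transpose (X Y : Matrix (Fin 2) (Fin 2) ℤ) (hX : Xᵀ = Y) (hY : Yᵀ = X)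
    (l : List ℕ) :
    (altProd X Y l)ᵀ =
      if Even l.length then altProd X Y l.reverse else altProd Y X l.reverse := by
  induction l generalizing X Y with
  | nil => simp [altProd_nil]
  | cons a t ih =>
    rw [altProd_cons, Matrix.transpose_mul, Matrix.transpose_pow, hX, ih Y X hY hX]
    simp only [List.reverse_cons, List.length_cons]
    by_cases h : Even t.length
    · rw [if_pos h, if_neg (by simp [Nat.even_add_one, h]), altProd_concat,
        if_pos (by simpa using h)]
    · rw [if_neg h, if_pos (by simp [Nat.even_add_one, h]), altProd_concat,
        if_neg (by simpa using h)]

lemma mul_entries (P M : Matrix (Fin 2) (Fin 2) ℤ) (i j : Fin 2) :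
    (P * M) i j = P i 0 * M 0 j + P i 1 * M 1 j := by
  rw [Matrix.mul_apply, Fin.sum_univ_two]

lemma matA_pow_mul (a : ℕ) (M : Matrix (Fin 2) (Fin 2) ℤ) (j : Fin 2) :
    (matA ^ a * M) 0 j = M 0 j ∧ (matA ^ a * M) 1 j = a * M 0 j + M 1 j := by
  constructor <;> rw [mul_entries, matA_pow] <;> simp

lemma matB_pow_mul (a : ℕ) (M : Matrix (Fin 2) (Fin 2) ℤ) (j : Fin 2) :
    (matB ^ a * M) 0 j = M 0 j + a * M 1 j ∧ (matB ^ a * M) 1 j = M 1 j := by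
  constructor <;> rw [mul_entries, matB_pow] <;> simp

/-- entry invariants for alternating products. -/
lemma altProd_inv : ∀ e : List ℕ, e ≠ [] → (∀ x ∈ e, 0 < x) →
    (let M := altProd matA matB e;
      1 ≤ M 0 0 ∧ 0 ≤ M 0 1 ∧ 1 ≤ M 1 0 ∧ 1 ≤ M 1 1 ∧
        (e.sum : ℤ) + 2 ≤ M 0 0 + M 0 1 + M 1 0 + M 1 1) ∧
    (let M := altProd matB matA e;
      1 ≤ M 0 0 ∧ 1 ≤ M 0 1 ∧ 0 ≤ M 1 0 ∧ 1 ≤ M 1 1 ∧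
        (e.sum : ℤ) + 2 ≤ M 0 0 + M 0 1 + M 1 0 + M 1 1) := by
  intro e
  induction e with
  | nil => intro h; exact absurd rfl h
  | cons a t ih =>
    intro _ hpos
    have ha : (1 : ℤ) ≤ (a : ℤ) := by
      have := hpos a (List.mem_cons_self); exact_mod_cast this
    rcases eq_or_ne t [] with rfl | ht
    · constructor
      · have h00 : altProd matA matB [a] = !![1, 0; (a : ℤ), 1] := by
          rw [altProd_cons, altProd_nil, mul_one, matA_pow]
        refine ⟨?_, ?_, ?_, ?_, ?_⟩ <;> (try simp [h00]) <;> (try push_cast) <;> linarith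
      · have h00 : altProd matB matA [a] = !![1, (a : ℤ); 0, 1] := by
          rw [altProd_cons, altProd_nil, mul_one, matB_pow]
        refine ⟨?_, ?_, ?_, ?_, ?_⟩ <;> (try simp [h00]) <;> (try push_cast) <;> linarith
    · have hpt : ∀ x ∈ t, 0 < x := fun x hx => hpos x (List.mem_cons_of_mem a hx)
      obtain ⟨hAB, hBA⟩ := ih ht hpt
      simp only at hAB hBA
      obtain ⟨b1, b2, b3, b4, b5⟩ := hBA
      obtain ⟨a1, a2, a3, a4, a5⟩ := hAB
      constructor
      · simp only [altProd_cons]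
        set M := altProd matB matA t with hM
        rw [(matA_pow_mul a M 0).1, (matA_pow_mul a M 1).1,
            (matA_pow_mul a M 0).2, (matA_pow_mul a M 1).2]
        push_cast [List.sum_cons] at b5 ⊢
        have key : (a : ℤ) * 2 ≤ (a : ℤ) * (M 0 0 + M 0 1) :=
          mul_le_mul_of_nonneg_left (by linarith) (by linarith)
        refine ⟨b1, by linarith, by nlinarith, by nlinarith, by linarith⟩
      · simp only [altProd_cons]
        set M := altProd matA matB t with hM
        rw [(matB_pow_mul a M 0).1, (matB_pow_mul a M 1).1,
            (matB_pow_mul a M 0).2, (matB_pow_mul a M 1).2]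
        push_cast [List.sum_cons] at a5 ⊢
        have key : (a : ℤ) * 1 ≤ (a : ℤ) * (M 1 0 + M 1 1) :=
          mul_le_mul_of_nonneg_left (by linarith) (by linarith)
        refine ⟨by nlinarith, by nlinarith, by linarith, a4, by linarith⟩

/-- for length ≥ 2 all entries are ≥ 1 (AB version). -/
lemma altProd_AB_entries (a : ℕ) (t : List ℕ) (ht : t ≠ []) (hpos : ∀ x ∈ a :: t, 0 < x) :
    (let M := altProd matA matB (a :: t);
      1 ≤ M 0 0 ∧ 1 ≤ M 0 1 ∧ 1 ≤ M 1 0 ∧ 2 ≤ M 1 1 ∧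
        ((a :: t).sum : ℤ) + 2 ≤ M 0 0 + M 0 1 + M 1 0 + M 1 1) := by
  have ha : (1 : ℤ) ≤ (a : ℤ) := by
    have := hpos a (List.mem_cons_self); exact_mod_cast this
  have hpt : ∀ x ∈ t, 0 < x := fun x hx => hpos x (List.mem_cons_of_mem a hx)
  obtain ⟨⟨a1, a2, a3, a4, a5⟩, _⟩ := altProd_inv (a :: t) (by simp) hpos
  obtain ⟨_, ⟨b1, b2, b3, b4, b5⟩⟩ := altProd_inv t ht hpt
  refine ⟨a1, ?_, a3, ?_, a5⟩
  · simp only [altProd_cons]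
    rw [(matA_pow_mul a _ 1).1]
    exact b2
  · simp only [altProd_cons]
    rw [(matA_pow_mul a _ 1).2]
    nlinarith

lemma altProd_BA_entries (a : ℕ) (t : List ℕ) (ht : t ≠ []) (hpos : ∀ x ∈ a :: t, 0 < x) :
    (let M := altProd matB matA (a :: t);
      2 ≤ M 0 0 ∧ 1 ≤ M 0 1 ∧ 1 ≤ M 1 0 ∧ 1 ≤ M 1 1 ∧
        ((a :: t).sum : ℤ) + 2 ≤ M 0 0 + M 0 1 + M 1 0 + M 1 1) := by
  have ha : (1 : ℤ) ≤ (a : ℤ) := by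
    have := hpos a (List.mem_cons_self); exact_mod_cast this
  have hpt : ∀ x ∈ t, 0 < x := fun x hx => hpos x (List.mem_cons_of_mem a hx)
  obtain ⟨_, ⟨b1, b2, b3, b4, b5⟩⟩ := altProd_inv (a :: t) (by simp) hpos
  obtain ⟨⟨a1, a2, a3, a4, a5⟩, _⟩ := altProd_inv t ht hpt
  refine ⟨?_, b2, ?_, b4, b5⟩
  · simp only [altProd_cons]
    rw [(matB_pow_mul a _ 0).1]
    nlinarith
  · simp only [altProd_cons]
    rw [(matB_pow_mul a _ 0).2]
    exact a3

lemma trace_fin2 (M : Matrix (Fin 2) (Fin 2) ℤ) : M.trace = M 0 0 + M 1 1 :=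
  Matrix.trace_fin_two M

lemma altProd_AB_trace_ge (a : ℕ) (t : List ℕ) (ht : t ≠ []) (hpos : ∀ x ∈ a :: t, 0 < x) :
    3 ≤ (altProd matA matB (a :: t)).trace := by
  obtain ⟨h1, _, _, h4, _⟩ := altProd_AB_entries a t ht hpos
  rw [trace_fin2]; linarith

lemma altProd_BA_trace_ge (a : ℕ) (t : List ℕ) (ht : t ≠ []) (hpos : ∀ x ∈ a :: t, 0 < x) :
    3 ≤ (altProd matB matA (a :: t)).trace := by
  obtain ⟨h1, _, _, h4, _⟩ := altProd_BA_entries a t ht hpos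
  rw [trace_fin2]; linarith

lemma altProd_det (X Y : Matrix (Fin 2) (Fin 2) ℤ) (hX : X.det = 1) (hY : Y.det = 1) :
    ∀ e : List ℕ, (altProd X Y e).det = 1 := by
  intro e
  induction e generalizing X Y with
  | nil => simp [altProd_nil]
  | cons a t ih =>
    rw [altProd_cons, Matrix.det_mul, Matrix.det_pow, hX, ih Y X hY hX]
    simp

lemma matA_det : matA.det = 1 := by simp [matA, Matrix.det_fin_two_of]
lemma matB_det : matB.det = 1 := by simp [matB, Matrix.det_fin_two_of]

lemma sum_le_of_trace_le {N : ℤ} (M : Matrix (Fin 2) (Fin 2) ℤ) (hdet : M.det = 1)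
    (h00 : 1 ≤ M 0 0) (h01 : 1 ≤ M 0 1) (h10 : 1 ≤ M 1 0) (h11 : 1 ≤ M 1 1)
    (htr : M.trace ≤ N) : M 0 0 + M 0 1 + M 1 0 + M 1 1 ≤ N + 2 * N * N := by
  rw [Matrix.det_fin_two] at hdet
  rw [trace_fin2] at htr
  have hN2 : 2 ≤ N := by linarith
  have e1 : M 0 0 * M 1 1 ≤ (N - 1) * (N - 1) :=
    mul_le_mul (by linarith) (by linarith) (by linarith) (by linarith)
  have e2 : 0 ≤ M 0 1 * (M 1 0 - 1) := mul_nonneg (by linarith) (by linarith)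
  have e3 : 0 ≤ M 1 0 * (M 0 1 - 1) := mul_nonneg (by linarith) (by linarith)
  nlinarith [sq_nonneg N]

lemma length_le_sum : ∀ l : List ℕ, (∀ x ∈ l, 0 < x) → l.length ≤ l.sum := by
  intro l
  induction l with
  | nil => simp
  | cons a t ih =>
    intro h
    have := h a (List.mem_cons_self)
    have := ih fun x hx => h x (List.mem_cons_of_mem a hx)
    simp only [List.length_cons, List.sum_cons]
    omega

lemma list_bounds {N : ℤ} (l : List ℕ) (hl2 : 2 ≤ l.length) (hpos : ∀ x ∈ l, 0 < x)
    (hM : (altProd matA matB l).trace ≤ N ∨ (altProd matB matA l).trace ≤ N) :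
    l.length ≤ (N + 2 * N * N).toNat ∧ ∀ x ∈ l, x ≤ (N + 2 * N * N).toNat := by
  cases l with
  | nil => simp at hl2
  | cons a t =>
    have ht : t ≠ [] := by
      intro h; subst h; simp at hl2
    have hsum : ((a :: t).sum : ℤ) + 2 ≤ N + 2 * N * N := by
      rcases hM with htr | htr
      · obtain ⟨h1, h2, h3, h4, h5⟩ := altProd_AB_entries a t ht hpos
        have := sum_le_of_trace_le (altProd matA matB (a :: t))
          (altProd_det matA matB matA_det matB_det _) h1 h2 h3 (by linarith) htr
        linarith
      · obtain ⟨h1, h2, h3, h4, h5⟩ := altProd_BA_entries a t ht hpos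
        have := sum_le_of_trace_le (altProd matB matA (a :: t))
          (altProd_det matB matA matB_det matA_det _) (by linarith) h2 h3 h4 htr
        linarith
    have hsum' : (a :: t).sum ≤ (N + 2 * N * N).toNat := by omega
    constructor
    · exact le_trans (length_le_sum _ hpos) hsum'
    · intro x hx
      exact le_trans (List.single_le_sum (fun y _ => Nat.zero_le y) x hx) hsum'

lemma finite_aux (K : ℕ) : Finite {l : List ℕ // l.length ≤ K ∧ ∀ x ∈ l, x ≤ K} := by
  have hf : {l : List (Fin (K + 1)) | l.length ≤ K}.Finite := List.finite_length_le _ K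
  have := hf.to_subtype
  refine Finite.of_injective
    (fun p => (⟨p.1.map fun x => (⟨min x K, by omega⟩ : Fin (K + 1)),
      by simpa using p.2.1⟩ : {l : List (Fin (K + 1)) | l.length ≤ K})) ?_
  have key : ∀ (l : List ℕ), (∀ x ∈ l, x ≤ K) →
      (l.map fun x => (⟨min x K, by omega⟩ : Fin (K + 1))).map Fin.val = l := by
    intro l hl
    rw [List.map_map]
    have : ∀ x ∈ l, (Fin.val ∘ fun x => (⟨min x K, by omega⟩ : Fin (K + 1))) x = id x := by
      intro x hx
      simp [Nat.min_eq_left (hl x hx)]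
    rw [List.map_congr_left this, List.map_id]
  rintro ⟨l1, h1, h1'⟩ ⟨l2, h2, h2'⟩ h
  simp only [Subtype.mk.injEq] at h ⊢
  rw [← key l1 h1', ← key l2 h2', h]

instance EvS_finite (N : ℤ) : Finite {l : List ℕ // l ≠ [] ∧ Even l.length ∧
    (∀ x ∈ l, 0 < x) ∧ (altProd matA matB l).trace ≤ N} := by
  have := finite_aux (N + 2 * N * N).toNat
  refine Finite.of_injective (fun p =>
    (⟨p.1, ?_⟩ : {l : List ℕ // l.length ≤ (N + 2 * N * N).toNat ∧
      ∀ x ∈ l, x ≤ (N + 2 * N * N).toNat})) ?_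
  · obtain ⟨hne, hev, hpos, htr⟩ := p.2
    have hl2 : 2 ≤ p.1.length := by
      rcases hev with ⟨k, hk⟩
      have : p.1.length ≠ 0 := fun h => hne (List.length_eq_zero_iff.mp h)
      omega
    exact list_bounds p.1 hl2 hpos (Or.inl htr)
  · rintro ⟨l1, h1⟩ ⟨l2, h2⟩ h
    simpa using congrArg Subtype.val h

instance OddS_finite (N : ℤ) : Finite {l : List ℕ // Odd l.length ∧ 3 ≤ l.length ∧
    (∀ x ∈ l, 0 < x) ∧ (altProd matB matA l).trace ≤ N} := by
  have := finite_aux (N + 2 * N * N).toNat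
  refine Finite.of_injective (fun p =>
    (⟨p.1, ?_⟩ : {l : List ℕ // l.length ≤ (N + 2 * N * N).toNat ∧
      ∀ x ∈ l, x ≤ (N + 2 * N * N).toNat})) ?_
  · obtain ⟨hodd, h3, hpos, htr⟩ := p.2
    exact list_bounds p.1 (by omega) hpos (Or.inr htr)
  · rintro ⟨l1, h1⟩ ⟨l2, h2⟩ h
    simpa using congrArg Subtype.val h

def matOf (c : Bool) : Matrix (Fin 2) (Fin 2) ℤ := if c then matA else matB

def decode : Bool → List ℕ → List Bool
  | _, [] => []
  | c, a :: t => List.replicate a c ++ decode (!c) t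

def rleP : List Bool → List (Bool × ℕ)
  | [] => []
  | c :: t => match rleP t with
    | [] => [(c, 1)]
    | (d, n) :: r => if c = d then (c, n + 1) :: r else (c, 1) :: (d, n) :: r

def zipAlt : Bool → List ℕ → List (Bool × ℕ)
  | _, [] => []
  | c, a :: t => (c, a) :: zipAlt (!c) t

lemma zipAlt_map_snd : ∀ (e : List ℕ) (c : Bool), (zipAlt c e).map Prod.snd = e := by
  intro e
  induction e with
  | nil => intro c; rfl
  | cons a t ih => intro c; simp [zipAlt, ih]

lemma zipAlt_length : ∀ (e : List ℕ) (c : Bool), (zipAlt c e).length = e.length := by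
  intro e
  induction e with
  | nil => intro c; rfl
  | cons a t ih => intro c; simp [zipAlt, ih]

lemma wordProd_append (l1 l2 : List Bool) :
    wordProd (l1 ++ l2) = wordProd l1 * wordProd l2 := by
  simp [wordProd]

lemma wordProd_replicate (a : ℕ) (c : Bool) :
    wordProd (List.replicate a c) = (matOf c) ^ a := by
  simp [wordProd, List.map_replicate, List.prod_replicate, matOf]

lemma wordProd_decode : ∀ (e : List ℕ) (c : Bool),
    wordProd (decode c e) = altProd (matOf c) (matOf (!c)) e := by
  intro e
  induction e with
  | nil => intro c; rfl
  | cons a t ih =>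
    intro c
    show wordProd (List.replicate a c ++ decode (!c) t) = _
    rw [wordProd_append, wordProd_replicate, altProd_cons, ih (!c)]
    rw [Bool.not_not]

lemma rleP_replicate_append : ∀ (a : ℕ) (c : Bool) (r : List Bool), 0 < a →
    (∀ d n r', rleP r = (d, n) :: r' → d ≠ c) →
    rleP (List.replicate a c ++ r) = (c, a) :: rleP r := by
  intro a
  induction a with
  | zero => intro c r h; omega
  | succ a ih =>
    intro c r _ hr
    rcases Nat.eq_zero_or_pos a with rfl | ha
    · show rleP (c :: r) = (c, 1) :: rleP r
      cases hrle : rleP r with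
      | nil => simp [rleP, hrle]
      | cons p r' =>
        obtain ⟨d, n⟩ := p
        have hd : d ≠ c := hr d n r' hrle
        simp [rleP, hrle, Ne.symm hd]
    · have h1 := ih c r ha hr
      rw [List.replicate_succ, List.cons_append]
      show rleP (c :: (List.replicate a c ++ r)) = _
      simp [rleP, h1]

lemma rleP_decode : ∀ (e : List ℕ) (c : Bool), (∀ x ∈ e, 0 < x) →
    rleP (decode c e) = zipAlt c e := by
  intro e
  induction e with
  | nil => intro c _; rfl
  | cons a t ih =>
    intro c hpos
    have ha : 0 < a := hpos a (List.mem_cons_self)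
    have ht : ∀ x ∈ t, 0 < x := fun x hx => hpos x (List.mem_cons_of_mem a hx)
    show rleP (List.replicate a c ++ decode (!c) t) = (c, a) :: zipAlt (!c) t
    rw [rleP_replicate_append a c _ ha ?_, ih (!c) ht]
    intro d n r' hdr
    rw [ih (!c) ht] at hdr
    cases t with
    | nil => simp [zipAlt] at hdr
    | cons b u =>
      simp only [zipAlt, List.cons.injEq, Prod.mk.injEq] at hdr
      obtain ⟨⟨rfl, -⟩, -⟩ := hdr
      simp

lemma rleP_cons_head : ∀ (c : Bool) (t : List Bool), ∃ n r, rleP (c :: t) = (c, n) :: r := by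
  intro c t
  cases h : rleP t with
  | nil => exact ⟨1, [], by simp [rleP, h]⟩
  | cons p r =>
    obtain ⟨d, n⟩ := p
    by_cases hcd : c = d
    · subst hcd; exact ⟨n + 1, r, by simp [rleP, h]⟩
    · exact ⟨1, (d, n) :: r, by simp [rleP, h, hcd]⟩

lemma decode_rleP : ∀ (l : List Bool) (c : Bool) (t : List Bool), l = c :: t →
    decode c ((rleP l).map Prod.snd) = l := by
  intro l
  induction l with
  | nil => intro c t h; simp at h
  | cons c0 t0 ih =>
    intro c' t' h
    injection h with h1 h2
    subst h1; subst h2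
    cases t0 with
    | nil => simp [rleP, decode]
    | cons d u =>
      obtain ⟨n, r, hrle⟩ := rleP_cons_head d u
      have iht := ih d u rfl
      rw [hrle] at iht
      simp only [List.map_cons] at iht
      by_cases hcd : c0 = d
      · subst hcd
        have h2 : rleP (c0 :: c0 :: u) = (c0, n + 1) :: r := by
          conv_lhs => rw [rleP]
          rw [hrle]
          simp
        rw [h2]
        simp only [List.map_cons]
        show List.replicate (n + 1) c0 ++ decode (!c0) (r.map Prod.snd) = c0 :: c0 :: u
        rw [List.replicate_succ, List.cons_append]
        have iht' : List.replicate n c0 ++ decode (!c0) (r.map Prod.snd) = c0 :: u := iht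
        rw [iht']
      · have h2 : rleP (c0 :: d :: u) = (c0, 1) :: (d, n) :: r := by
          conv_lhs => rw [rleP]
          rw [hrle]
          simp [hcd]
        rw [h2]
        simp only [List.map_cons]
        have hnc : (!c0) = d := by cases c0 <;> cases d <;> simp_all
        show List.replicate 1 c0 ++ decode (!c0) (n :: r.map Prod.snd) = c0 :: d :: u
        rw [hnc]
        show c0 :: decode d (n :: r.map Prod.snd) = c0 :: d :: u
        rw [iht]

lemma rleP_pos : ∀ (l : List Bool) (p : Bool × ℕ), p ∈ rleP l → 0 < p.2 := by
  intro l
  induction l with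
  | nil => intro p hp; simp [rleP] at hp
  | cons c t ih =>
    intro p hp
    conv at hp => rw [rleP]
    cases h : rleP t with
    | nil => rw [h] at hp; simp at hp; subst hp; norm_num
    | cons q r =>
      obtain ⟨d, n⟩ := q
      rw [h] at hp
      by_cases hcd : c = d
      · simp [hcd] at hp
        rcases hp with rfl | hp
        · norm_num
        · exact ih p (by rw [h]; exact List.mem_cons_of_mem _ hp)
      · simp [hcd] at hp
        rcases hp with rfl | rfl | hp
        · norm_num
        · exact ih (d, n) (by rw [h]; exact List.mem_cons_self)
        · exact ih p (by rw [h]; exact List.mem_cons_of_mem _ hp)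

def rotL : List ℕ → List ℕ
  | [] => []
  | a :: t => t ++ [a]

def rotR (l : List ℕ) : List ℕ :=
  match l.getLast? with
  | none => []
  | some a => a :: l.dropLast

lemma rotR_concat (t : List ℕ) (a : ℕ) : rotR (t ++ [a]) = a :: t := by
  rw [rotR, List.getLast?_concat, List.dropLast_concat]

lemma rotR_rotL : ∀ l : List ℕ, rotR (rotL l) = l := by
  intro l
  cases l with
  | nil => rfl
  | cons a t => exact rotR_concat t a

lemma rotL_rotR : ∀ l : List ℕ, l ≠ [] → rotL (rotR l) = l := by
  intro l hl
  have h1 : l.getLast? = some (l.getLast hl) := List.getLast?_eq_getLast hl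
  rw [rotR, h1]
  show l.dropLast ++ [l.getLast hl] = l
  exact List.dropLast_append_getLast hl

lemma mem_rotR : ∀ (l : List ℕ) (x : ℕ), x ∈ rotR l → x ∈ l := by
  intro l x h
  rw [rotR] at h
  cases hl : l.getLast? with
  | none => rw [hl] at h; simp at h
  | some a =>
    rw [hl] at h
    rcases List.mem_cons.mp h with rfl | h2
    · obtain ⟨hne, ha⟩ := List.mem_getLast?_eq_getLast hl
      rw [ha]; exact List.getLast_mem hne
    · exact (List.dropLast_sublist _).mem h2

lemma rotR_length : ∀ l : List ℕ, (rotR l).length = l.length := by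
  intro l
  rw [rotR]
  cases hl : l.getLast? with
  | none => rw [List.getLast?_eq_none_iff.mp hl]
  | some a =>
    have hne : l ≠ [] := by
      intro h; subst h; simp at hl
    simp only [List.length_cons, List.length_dropLast]
    have : l.length ≠ 0 := fun h => hne (List.length_eq_zero_iff.mp h)
    omega

lemma rotL_length : ∀ l : List ℕ, (rotL l).length = l.length := by
  intro l
  cases l with
  | nil => rfl
  | cons a t => simp [rotL]

lemma mem_rotL : ∀ (l : List ℕ) (x : ℕ), x ∈ rotL l → x ∈ l := by
  intro l x h
  cases l with
  | nil => simpa [rotL] using h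
  | cons a t =>
    rcases List.mem_append.mp h with h2 | h2
    · exact List.mem_cons_of_mem _ h2
    · simp at h2; subst h2; exact List.mem_cons_self

lemma matA_transpose : matAᵀ = matB := by
  ext i j; fin_cases i <;> fin_cases j <;> simp [matA, matB]

lemma matB_transpose : matBᵀ = matA := by
  ext i j; fin_cases i <;> fin_cases j <;> simp [matA, matB]

lemma wordProd_decode_true (e : List ℕ) : wordProd (decode true e) = altProd matA matB e :=
  wordProd_decode e true

lemma wordProd_decode_false (e : List ℕ) : wordProd (decode false e) = altProd matB matA e :=
  wordProd_decode e false

lemma decode_ne_nil (c : Bool) (e : List ℕ) (he : e ≠ []) (hpos : ∀ x ∈ e, 0 < x) :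
    decode c e ≠ [] := by
  cases e with
  | nil => exact absurd rfl he
  | cons a t =>
    have ha : 0 < a := hpos a (List.mem_cons_self)
    show List.replicate a c ++ decode (!c) t ≠ []
    intro h
    rcases List.append_eq_nil_iff.mp h with ⟨h1, -⟩
    have := congrArg List.length h1
    simp at this
    omega

lemma rot_trace (a : ℕ) (t : List ℕ) (ht : ¬ Even t.length) :
    (altProd matB matA (a :: t)).trace = (altProd matA matB (t ++ [a])).trace := by
  rw [altProd_cons, altProd_concat, if_neg ht, Matrix.trace_mul_comm]

lemma rev_trace_BA (e : List ℕ) (hodd : ¬ Even e.length) :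
    (altProd matB matA e.reverse).trace = (altProd matA matB e).trace := by
  have h := altProd_transpose matA matB matA_transpose matB_transpose e
  rw [if_neg hodd] at h
  rw [← h, Matrix.trace_transpose]

lemma rev_trace_AB (e : List ℕ) (hodd : ¬ Even e.length) :
    (altProd matA matB e.reverse).trace = (altProd matB matA e).trace := by
  have h := altProd_transpose matB matA matB_transpose matA_transpose e
  rw [if_neg hodd] at h
  rw [← h, Matrix.trace_transpose]

lemma trace_decode_single (c : Bool) (a : ℕ) : (wordProd (decode c [a])).trace = 2 := by
  rw [wordProd_decode, altProd_cons, altProd_nil, mul_one]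
  cases c
  · exact trace_matB_pow a
  · exact trace_matA_pow a

lemma decode_inj {c c' : Bool} {e e' : List ℕ} (he : e ≠ []) (he' : e' ≠ [])
    (hp : ∀ x ∈ e, 0 < x) (hp' : ∀ x ∈ e', 0 < x)
    (h : decode c e = decode c' e') : c = c' ∧ e = e' := by
  have h1 : zipAlt c e = zipAlt c' e' := by
    rw [← rleP_decode e c hp, ← rleP_decode e' c' hp', h]
  have he2 : e = e' := by
    have := congrArg (List.map Prod.snd) h1
    rwa [zipAlt_map_snd, zipAlt_map_snd] at this
  refine ⟨?_, he2⟩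
  cases e with
  | nil => exact absurd rfl he
  | cons a t =>
    subst he2
    simp only [zipAlt, List.cons.injEq, Prod.mk.injEq] at h1
    exact h1.1.1

lemma two_le_cases (l : List ℕ) (h : 2 ≤ l.length) : ∃ a t, l = a :: t ∧ t ≠ [] := by
  cases l with
  | nil => simp at h
  | cons a t =>
    cases t with
    | nil => simp at h
    | cons b u => exact ⟨a, b :: u, rfl, by simp⟩

section
variable (N : ℤ)

lemma mem1 {e : List ℕ} (hne : e ≠ []) (hev : Even e.length) (hpos : ∀ x ∈ e, 0 < x)
    (htr : (altProd matA matB e).trace ≤ N) :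
    decode true e ≠ [] ∧ 3 ≤ (wordProd (decode true e)).trace ∧
      (wordProd (decode true e)).trace ≤ N := by
  have h2 : 2 ≤ e.length := by
    have : e.length ≠ 0 := fun h => hne (List.length_eq_zero_iff.mp h)
    rcases hev with ⟨k, hk⟩; omega
  obtain ⟨a, t, rfl, htne⟩ := two_le_cases e h2
  exact ⟨decode_ne_nil _ _ (by simp) hpos,
    by rw [wordProd_decode_true]; exact altProd_AB_trace_ge a t htne hpos,
    by rw [wordProd_decode_true]; exact htr⟩

lemma mem2 {e : List ℕ} (hne : e ≠ []) (hev : Even e.length) (hpos : ∀ x ∈ e, 0 < x)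
    (htr : (altProd matA matB e).trace ≤ N) :
    decode false (rotR e) ≠ [] ∧ 3 ≤ (wordProd (decode false (rotR e))).trace ∧
      (wordProd (decode false (rotR e))).trace ≤ N := by
  have h2 : 2 ≤ e.length := by
    have : e.length ≠ 0 := fun h => hne (List.length_eq_zero_iff.mp h)
    rcases hev with ⟨k, hk⟩; omega
  have hpos' : ∀ x ∈ rotR e, 0 < x := fun x hx => hpos x (mem_rotR e x hx)
  obtain ⟨a, t, hre, htne⟩ := two_le_cases (rotR e) (by rw [rotR_length]; exact h2)
  have htlen : ¬ Even t.length := by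
    have h3 := rotR_length e
    rw [hre] at h3
    simp only [List.length_cons] at h3
    rcases hev with ⟨k, hk⟩
    intro ⟨m, hm⟩
    omega
  have hrl : t ++ [a] = e := by
    have := rotL_rotR e hne
    rw [hre] at this
    exact this
  refine ⟨decode_ne_nil _ _ (by rw [hre]; simp) hpos', ?_, ?_⟩
  · rw [wordProd_decode_false, hre]
    exact altProd_BA_trace_ge a t htne (hre ▸ hpos')
  · rw [wordProd_decode_false, hre, rot_trace a t htlen, hrl]
    exact htr

lemma mem3 {e : List ℕ} (hodd : Odd e.length) (h3 : 3 ≤ e.length) (hpos : ∀ x ∈ e, 0 < x)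
    (htr : (altProd matB matA e).trace ≤ N) :
    decode false e ≠ [] ∧ 3 ≤ (wordProd (decode false e)).trace ∧
      (wordProd (decode false e)).trace ≤ N := by
  obtain ⟨a, t, rfl, htne⟩ := two_le_cases e (by omega)
  exact ⟨decode_ne_nil _ _ (by simp) hpos,
    by rw [wordProd_decode_false]; exact altProd_BA_trace_ge a t htne hpos,
    by rw [wordProd_decode_false]; exact htr⟩

lemma mem4 {e : List ℕ} (hodd : Odd e.length) (h3 : 3 ≤ e.length) (hpos : ∀ x ∈ e, 0 < x)
    (htr : (altProd matB matA e).trace ≤ N) :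
    decode true e.reverse ≠ [] ∧ 3 ≤ (wordProd (decode true e.reverse)).trace ∧
      (wordProd (decode true e.reverse)).trace ≤ N := by
  have hpos' : ∀ x ∈ e.reverse, 0 < x := fun x hx => hpos x (List.mem_reverse.mp hx)
  obtain ⟨a, t, hre, htne⟩ := two_le_cases e.reverse (by rw [List.length_reverse]; omega)
  have hodd' : ¬ Even e.length := by
    rw [Nat.not_even_iff_odd]; simpa using hodd
  refine ⟨decode_ne_nil _ _ (by rw [hre]; simp) hpos', ?_, ?_⟩
  · rw [wordProd_decode_true, hre]
    exact altProd_AB_trace_ge a t htne (hre ▸ hpos')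
  · rw [wordProd_decode_true, rev_trace_AB e hodd']
    exact htr

def GG : ({l : List ℕ // l ≠ [] ∧ Even l.length ∧ (∀ x ∈ l, 0 < x) ∧
      (altProd matA matB l).trace ≤ N} ⊕
    {l : List ℕ // l ≠ [] ∧ Even l.length ∧ (∀ x ∈ l, 0 < x) ∧
      (altProd matA matB l).trace ≤ N}) ⊕
    ({l : List ℕ // Odd l.length ∧ 3 ≤ l.length ∧ (∀ x ∈ l, 0 < x) ∧
      (altProd matB matA l).trace ≤ N} ⊕
    {l : List ℕ // Odd l.length ∧ 3 ≤ l.length ∧ (∀ x ∈ l, 0 < x) ∧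
      (altProd matB matA l).trace ≤ N}) →
    {l : List Bool // l ≠ [] ∧ 3 ≤ (wordProd l).trace ∧ (wordProd l).trace ≤ N}
  | .inl (.inl ⟨e, h⟩) => ⟨decode true e, mem1 N h.1 h.2.1 h.2.2.1 h.2.2.2⟩
  | .inl (.inr ⟨e, h⟩) => ⟨decode false (rotR e), mem2 N h.1 h.2.1 h.2.2.1 h.2.2.2⟩
  | .inr (.inl ⟨e, h⟩) => ⟨decode false e, mem3 N h.1 h.2.1 h.2.2.1 h.2.2.2⟩
  | .inr (.inr ⟨e, h⟩) => ⟨decode true e.reverse, mem4 N h.1 h.2.1 h.2.2.1 h.2.2.2⟩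

end

lemma rotR_ne_nil (e : List ℕ) (h : e ≠ []) : rotR e ≠ [] := by
  intro hh
  apply h
  have h1 := rotR_length e
  rw [hh] at h1
  exact List.length_eq_zero_iff.mp h1.symm

lemma GG_inj (N : ℤ) : Function.Injective (GG N) := by
  rintro ((⟨e, h⟩ | ⟨e, h⟩) | (⟨e, h⟩ | ⟨e, h⟩)) ((⟨f, g⟩ | ⟨f, g⟩) | (⟨f, g⟩ | ⟨f, g⟩)) hxy
  · have hw : decode true e = decode true f := congrArg Subtype.val hxy
    obtain ⟨-, rfl⟩ := decode_inj h.1 g.1 h.2.2.1 g.2.2.1 hw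
    rfl
  · have hw : decode true e = decode false (rotR f) := congrArg Subtype.val hxy
    have := (decode_inj h.1 (rotR_ne_nil f g.1) h.2.2.1
      (fun x hx => g.2.2.1 x (mem_rotR f x hx)) hw).1
    simp at this
  · have hw : decode true e = decode false f := congrArg Subtype.val hxy
    have hfne : f ≠ [] := fun hh => by rw [hh] at g; simp at g
    have := (decode_inj h.1 hfne h.2.2.1 g.2.2.1 hw).1
    simp at this
  · have hw : decode true e = decode true f.reverse := congrArg Subtype.val hxy
    have hfne : f ≠ [] := fun hh => by rw [hh] at g; simp at g
    obtain ⟨-, he⟩ := decode_inj h.1 (by simpa using hfne) h.2.2.1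
      (fun x hx => g.2.2.1 x (List.mem_reverse.mp hx)) hw
    exfalso
    have hev := h.2.1
    rw [he, List.length_reverse] at hev
    exact (Nat.not_even_iff_odd.mpr g.1) hev
  · have hw : decode false (rotR e) = decode true f := congrArg Subtype.val hxy
    have := (decode_inj (rotR_ne_nil e h.1) g.1
      (fun x hx => h.2.2.1 x (mem_rotR e x hx)) g.2.2.1 hw).1
    simp at this
  · have hw : decode false (rotR e) = decode false (rotR f) := congrArg Subtype.val hxy
    obtain ⟨-, he⟩ := decode_inj (rotR_ne_nil e h.1) (rotR_ne_nil f g.1)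
      (fun x hx => h.2.2.1 x (mem_rotR e x hx))
      (fun x hx => g.2.2.1 x (mem_rotR f x hx)) hw
    have hef : e = f := by
      rw [← rotL_rotR e h.1, he, rotL_rotR f g.1]
    subst hef
    rfl
  · have hw : decode false (rotR e) = decode false f := congrArg Subtype.val hxy
    have hfne : f ≠ [] := fun hh => by rw [hh] at g; simp at g
    obtain ⟨-, he⟩ := decode_inj (rotR_ne_nil e h.1) hfne
      (fun x hx => h.2.2.1 x (mem_rotR e x hx)) g.2.2.1 hw
    exfalso
    have hev := h.2.1
    rw [← rotR_length e, he] at hev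
    exact (Nat.not_even_iff_odd.mpr g.1) hev
  · have hw : decode false (rotR e) = decode true f.reverse := congrArg Subtype.val hxy
    have hfne : f ≠ [] := fun hh => by rw [hh] at g; simp at g
    have := (decode_inj (rotR_ne_nil e h.1) (by simpa using hfne)
      (fun x hx => h.2.2.1 x (mem_rotR e x hx))
      (fun x hx => g.2.2.1 x (List.mem_reverse.mp hx)) hw).1
    simp at this
  · have hw : decode false e = decode true f := congrArg Subtype.val hxy
    have hene : e ≠ [] := fun hh => by rw [hh] at h; simp at h
    have := (decode_inj hene g.1 h.2.2.1 g.2.2.1 hw).1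
    simp at this
  · have hw : decode false e = decode false (rotR f) := congrArg Subtype.val hxy
    have hene : e ≠ [] := fun hh => by rw [hh] at h; simp at h
    obtain ⟨-, he⟩ := decode_inj hene (rotR_ne_nil f g.1) h.2.2.1
      (fun x hx => g.2.2.1 x (mem_rotR f x hx)) hw
    exfalso
    have hev := g.2.1
    rw [← rotR_length f, ← he] at hev
    exact (Nat.not_even_iff_odd.mpr h.1) hev
  · have hw : decode false e = decode false f := congrArg Subtype.val hxy
    have hene : e ≠ [] := fun hh => by rw [hh] at h; simp at h
    have hfne : f ≠ [] := fun hh => by rw [hh] at g; simp at g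
    obtain ⟨-, rfl⟩ := decode_inj hene hfne h.2.2.1 g.2.2.1 hw
    rfl
  · have hw : decode false e = decode true f.reverse := congrArg Subtype.val hxy
    have hene : e ≠ [] := fun hh => by rw [hh] at h; simp at h
    have hfne : f ≠ [] := fun hh => by rw [hh] at g; simp at g
    have := (decode_inj hene (by simpa using hfne) h.2.2.1
      (fun x hx => g.2.2.1 x (List.mem_reverse.mp hx)) hw).1
    simp at this
  · have hw : decode true e.reverse = decode true f := congrArg Subtype.val hxy
    have hene : e ≠ [] := fun hh => by rw [hh] at h; simp at h
    obtain ⟨-, he⟩ := decode_inj (by simpa using hene) g.1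
      (fun x hx => h.2.2.1 x (List.mem_reverse.mp hx)) g.2.2.1 hw
    exfalso
    have hev := g.2.1
    rw [← he, List.length_reverse] at hev
    exact (Nat.not_even_iff_odd.mpr h.1) hev
  · have hw : decode true e.reverse = decode false (rotR f) := congrArg Subtype.val hxy
    have hene : e ≠ [] := fun hh => by rw [hh] at h; simp at h
    have := (decode_inj (by simpa using hene) (rotR_ne_nil f g.1)
      (fun x hx => h.2.2.1 x (List.mem_reverse.mp hx))
      (fun x hx => g.2.2.1 x (mem_rotR f x hx)) hw).1
    simp at this
  · have hw : decode true e.reverse = decode false f := congrArg Subtype.val hxy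
    have hene : e ≠ [] := fun hh => by rw [hh] at h; simp at h
    have hfne : f ≠ [] := fun hh => by rw [hh] at g; simp at g
    have := (decode_inj (by simpa using hene) hfne
      (fun x hx => h.2.2.1 x (List.mem_reverse.mp hx)) g.2.2.1 hw).1
    simp at this
  · have hw : decode true e.reverse = decode true f.reverse := congrArg Subtype.val hxy
    have hene : e ≠ [] := fun hh => by rw [hh] at h; simp at h
    have hfne : f ≠ [] := fun hh => by rw [hh] at g; simp at g
    obtain ⟨-, he⟩ := decode_inj (by simpa using hene) (by simpa using hfne)
      (fun x hx => h.2.2.1 x (List.mem_reverse.mp hx))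
      (fun x hx => g.2.2.1 x (List.mem_reverse.mp hx)) hw
    have : e = f := List.reverse_injective he
    subst this
    rfl

lemma GG_surj (N : ℤ) : Function.Surjective (GG N) := by
  rintro ⟨l, hne, h3, hN⟩
  cases l with
  | nil => exact absurd rfl hne
  | cons c t =>
  obtain ⟨e, hdec, hpos, hene⟩ :
      ∃ e, decode c e = c :: t ∧ (∀ x ∈ e, 0 < x) ∧ e ≠ [] := by
    refine ⟨(rleP (c :: t)).map Prod.snd, decode_rleP (c :: t) c t rfl, ?_, ?_⟩
    · intro x hx
      obtain ⟨p, hp, rfl⟩ := List.mem_map.mp hx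
      exact rleP_pos _ p hp
    · obtain ⟨n, r, hr⟩ := rleP_cons_head c t
      rw [hr]; simp
  have h2 : 2 ≤ e.length := by
    rcases e with _ | ⟨a, _ | ⟨b, u⟩⟩
    · exact absurd rfl hene
    · exfalso
      rw [← hdec, trace_decode_single] at h3
      omega
    · simp
  cases c
  · -- c = false
    rcases Nat.even_or_odd e.length with hev | hodd
    · -- branch 2 : rotL e
      obtain ⟨a, u, he2, hune⟩ := two_le_cases e h2
      have hulen : ¬ Even u.length := by
        rcases hev with ⟨k, hk⟩
        rw [he2] at hk
        simp only [List.length_cons] at hk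
        intro ⟨m, hm⟩
        omega
      have htr : (altProd matA matB (rotL e)).trace ≤ N := by
        rw [← hdec, wordProd_decode_false] at hN
        rw [he2] at hN ⊢
        show (altProd matA matB (u ++ [a])).trace ≤ N
        rw [← rot_trace a u hulen]
        exact hN
      refine ⟨.inl (.inr ⟨rotL e, ?_, ?_, ?_, htr⟩), ?_⟩
      · intro hh
        apply hene
        have := rotL_length e
        rw [hh] at this
        exact List.length_eq_zero_iff.mp this.symm
      · rw [rotL_length]; exact hev
      · exact fun x hx => hpos x (mem_rotL e x hx)
      · apply Subtype.ext
        show decode false (rotR (rotL e)) = false :: t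
        rw [rotR_rotL, hdec]
    · -- branch 3
      have h3e : 3 ≤ e.length := by
        rcases hodd with ⟨k, hk⟩
        omega
      have htr : (altProd matB matA e).trace ≤ N := by
        rw [← hdec, wordProd_decode_false] at hN
        exact hN
      refine ⟨.inr (.inl ⟨e, hodd, h3e, hpos, htr⟩), ?_⟩
      exact Subtype.ext hdec
  · -- c = true
    rcases Nat.even_or_odd e.length with hev | hodd
    · -- branch 1
      have htr : (altProd matA matB e).trace ≤ N := by
        rw [← hdec, wordProd_decode_true] at hN
        exact hN
      refine ⟨.inl (.inl ⟨e, hene, hev, hpos, htr⟩), ?_⟩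
      exact Subtype.ext hdec
    · -- branch 4 : e.reverse
      have h3e : 3 ≤ e.length := by
        rcases hodd with ⟨k, hk⟩
        omega
      have hodd' : ¬ Even e.length := Nat.not_even_iff_odd.mpr hodd
      have htr : (altProd matB matA e.reverse).trace ≤ N := by
        rw [← hdec, wordProd_decode_true] at hN
        rw [rev_trace_BA e hodd']
        exact hN
      refine ⟨.inr (.inr ⟨e.reverse, by rwa [List.length_reverse], by rwa [List.length_reverse],
        fun x hx => hpos x (List.mem_reverse.mp hx), htr⟩), ?_⟩
      apply Subtype.ext
      show decode true e.reverse.reverse = _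
      rw [List.reverse_reverse, hdec]


/-- `Ψ(N) = 2 Ψ_ev(N) + 2 Ψ_odd(N)`. -/
theorem stmt_8 (N : ℤ) : PsiTot N = 2 * PsiEv N + 2 * PsiOdd N := by
  have hbij : Function.Bijective (GG N) := ⟨GG_inj N, GG_surj N⟩
  have h1 := (Nat.card_congr (Equiv.ofBijective _ hbij)).symm
  rw [PsiTot, PsiEv, PsiOdd, h1, Nat.card_sum, Nat.card_sum, Nat.card_sum]
  ring
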